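/- Let 1 < p < ∞ and ε > 0. Then there exists δ > 0, depending only on p and ε, such that for every probability space (Ω, ν) and every measurable complex-valued function z on Ω with ‖z‖_{L^p(ν)} ≤ 1 and Re ∫ z dν > 1 − δ, one has ‖z − 1‖_{L^p(ν)} < ε. -/

import Mathlib

open MeasureTheory

/-- Gradient inequality for `x ↦ x ^ p` (convexity): the graph lies above the tangent line. -/
lemma thin_slice_grad_ineq {p : ℝ} (hp : 1 < p) {x y : ℝ} (hx : 0 ≤ x) (hy : 0 < y) :
    y ^ p + p * y ^ (p - 1) * (x - y) ≤ x ^ p := by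
  have hs : -1 ≤ x / y - 1 := by
    have : 0 ≤ x / y := div_nonneg hx hy.le
    linarith
  have h := one_add_mul_self_le_rpow_one_add hs hp.le
  rw [show (1 : ℝ) + (x / y - 1) = x / y by ring] at h
  have hyp : (0 : ℝ) < y ^ p := Real.rpow_pos_of_pos hy p
  have h2 := mul_le_mul_of_nonneg_left h hyp.le
  rw [Real.div_rpow hx hy.le] at h2
  have hyne : y ^ p ≠ 0 := hyp.ne'
  rw [mul_div_cancel₀ _ hyne] at h2
  have hyp1 : y ^ p = y ^ (p - 1) * y := by
    rw [← Real.rpow_add_one hy.ne' (p - 1)]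
    norm_num
  calc y ^ p + p * y ^ (p - 1) * (x - y)
      = y ^ p * (1 + p * (x / y - 1)) := by
        rw [hyp1]; field_simp
    _ ≤ x ^ p := h2

/-- Young / Bernoulli: `p * r ≤ r ^ p + (p - 1)` for `r ≥ 0`, `p > 1`. -/
lemma thin_slice_young {p : ℝ} (hp : 1 < p) {r : ℝ} (hr : 0 ≤ r) :
    p * r ≤ r ^ p + (p - 1) := by
  have h := one_add_mul_self_le_rpow_one_add (s := r - 1) (by linarith) hp.le
  rw [show (1 : ℝ) + (r - 1) = r by ring] at h
  linarith

set_option maxHeartbeats 1000000 in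
/-- Key pointwise inequality: quantitative strict convexity near `1`. -/
lemma thin_slice_key (p : ℝ) (hp : 1 < p) (t : ℝ) (ht : 0 < t) (ht1 : t ≤ 1) :
    ∃ K > (0 : ℝ), ∀ w : ℂ,
      ‖w - 1‖ ^ p ≤ t ^ p + K * (‖w‖ ^ p - p * w.re + (p - 1)) := by
  have hp0 : (0 : ℝ) < p := by linarith
  set s : ℝ := t / 2 with hs_def
  have hs0 : 0 < s := by positivity
  have hs2 : s ≤ 1 / 2 := by rw [hs_def]; linarith
  have hm1 : 0 < (1 + s) ^ p - (1 + p * s) := by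
    have := one_add_mul_self_lt_rpow_one_add (s := s) (by linarith) hs0.ne' hp
    linarith
  have hm2 : 0 < (1 - s) ^ p - (1 - p * s) := by
    have := one_add_mul_self_lt_rpow_one_add (s := -s) (by linarith) (by simpa using hs0.ne') hp
    rw [show (1 : ℝ) + -s = 1 - s by ring] at this
    linarith
  set m : ℝ := min (p * t ^ 2 / 4) (min ((1 + s) ^ p - (1 + p * s)) ((1 - s) ^ p - (1 - p * s)))
    with hm_def
  have hm : 0 < m := lt_min (by positivity) (lt_min hm1 hm2)
  set R : ℝ := max 4 (2 * (2 * p) ^ (1 / (p - 1))) with hR_def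
  have hR4 : (4 : ℝ) ≤ R := le_max_left _ _
  have hR0 : (0:ℝ) < R := by linarith
  have hRb : 2 * (2 * p) ^ (1 / (p - 1)) ≤ R := le_max_right _ _
  set K : ℝ := max (R ^ p / m) (2 ^ (p + 1)) with hK_def
  have hKb : R ^ p / m ≤ K := le_max_left _ _
  have hK2 : (2 : ℝ) ^ (p + 1) ≤ K := le_max_right _ _
  have h2p1pos : (0:ℝ) < 2 ^ (p + 1) := Real.rpow_pos_of_pos two_pos _
  have hK : 0 < K := lt_of_lt_of_le h2p1pos hK2
  refine ⟨K, hK, fun w => ?_⟩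
  set r : ℝ := ‖w‖ with hr_def
  set a : ℝ := ‖w - 1‖ with ha_def
  have hr0 : 0 ≤ r := norm_nonneg _
  have ha0 : 0 ≤ a := norm_nonneg _
  have hre : w.re ≤ r := by
    rw [hr_def]; exact Complex.re_le_norm w
  have hsq : a ^ 2 = (r - 1) ^ 2 + 2 * (r - w.re) := by
    have h1 : a ^ 2 = (w.re - 1) ^ 2 + w.im ^ 2 := by
      rw [ha_def, Complex.sq_norm, Complex.normSq_apply]
      simp [Complex.sub_re, Complex.sub_im]
      ring
    have h2 : r ^ 2 = w.re ^ 2 + w.im ^ 2 := by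
      rw [hr_def, Complex.sq_norm, Complex.normSq_apply]
      ring
    nlinarith [h1, h2]
  have hyoung := thin_slice_young hp hr0
  have hrew : p * w.re ≤ p * r := mul_le_mul_of_nonneg_left hre hp0.le
  have hgnn : 0 ≤ r ^ p - p * w.re + (p - 1) := by linarith
  have htp : (0 : ℝ) ≤ t ^ p := Real.rpow_nonneg ht.le p
  rcases le_or_gt a t with hat | hat
  · have h1 : a ^ p ≤ t ^ p := Real.rpow_le_rpow ha0 hat hp0.le
    have h2 : 0 ≤ K * (r ^ p - p * w.re + (p - 1)) := mul_nonneg hK.le hgnn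
    linarith
  rcases le_or_gt a R with haR | haR
  · -- middle region: show the "defect" is at least m
    have hg : m ≤ r ^ p - p * w.re + (p - 1) := by
      have hat2 : t ^ 2 ≤ (r - 1) ^ 2 + 2 * (r - w.re) := by
        rw [← hsq]
        have := pow_le_pow_left₀ ht.le hat.le 2
        linarith
      rcases le_or_gt (t ^ 2 / 2) (2 * (r - w.re)) with hcase | hcase
      · have h1 : m ≤ p * t ^ 2 / 4 := min_le_left _ _
        have h2 : p * (t ^ 2 / 4) ≤ p * (r - w.re) :=
          mul_le_mul_of_nonneg_left (by linarith) hp0.le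
        linarith
      · have h3 : t ^ 2 / 2 ≤ (r - 1) ^ 2 := by linarith
        have h4 : s ≤ |r - 1| := by
          have h5 : s ^ 2 ≤ |r - 1| ^ 2 := by
            rw [sq_abs]
            have : s ^ 2 = t ^ 2 / 4 := by rw [hs_def]; ring
            linarith
          exact (pow_le_pow_iff_left₀ hs0.le (abs_nonneg _) two_ne_zero).mp h5
        have hm1' : m ≤ (1 + s) ^ p - (1 + p * s) := le_trans (min_le_right _ _) (min_le_left _ _)
        have hm2' : m ≤ (1 - s) ^ p - (1 - p * s) := le_trans (min_le_right _ _) (min_le_right _ _)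
        rcases le_abs.mp h4 with hrs | hrs
        · -- r ≥ 1 + s
          have hgrad := thin_slice_grad_ineq hp hr0 (show (0:ℝ) < 1 + s by linarith)
          have hbase : 1 ≤ (1 + s) ^ (p - 1) :=
            Real.one_le_rpow (by linarith) (by linarith)
          have hd : 0 ≤ r - (1 + s) := by linarith
          have hfac : p * (r - (1 + s)) ≤ p * ((1 + s) ^ (p - 1) * (r - (1 + s))) :=
            mul_le_mul_of_nonneg_left (le_mul_of_one_le_left hd hbase) hp0.le
          linarith [hgrad, hfac, hrew, hm1']
        · -- r ≤ 1 - s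
          have hrs' : r ≤ 1 - s := by linarith
          have hgrad := thin_slice_grad_ineq hp hr0 (show (0:ℝ) < 1 - s by linarith)
          have hbase : (1 - s) ^ (p - 1) ≤ 1 :=
            Real.rpow_le_one (by linarith) (by linarith) (by linarith)
          have hbase0 : 0 ≤ (1 - s) ^ (p - 1) :=
            Real.rpow_nonneg (by linarith) _
          have hd : r - (1 - s) ≤ 0 := by linarith
          have h9 : (1 - (1 - s) ^ (p - 1)) * (r - (1 - s)) ≤ 0 :=
            mul_nonpos_of_nonneg_of_nonpos (by linarith) hd
          have hfac : p * (r - (1 - s)) ≤ p * ((1 - s) ^ (p - 1) * (r - (1 - s))) :=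
            mul_le_mul_of_nonneg_left (by linarith [h9]) hp0.le
          linarith [hgrad, hfac, hrew, hm2']
    have haRp : a ^ p ≤ R ^ p := Real.rpow_le_rpow ha0 haR hp0.le
    have hRp0 : 0 ≤ R ^ p := Real.rpow_nonneg hR0.le p
    have h5 : R ^ p = R ^ p / m * m := (div_mul_cancel₀ _ hm.ne').symm
    have h7 : 0 ≤ R ^ p / m := div_nonneg hRp0 hm.le
    have h6 : R ^ p / m * m ≤ K * (r ^ p - p * w.re + (p - 1)) := by
      calc R ^ p / m * m ≤ R ^ p / m * (r ^ p - p * w.re + (p - 1)) :=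
            mul_le_mul_of_nonneg_left hg h7
        _ ≤ K * (r ^ p - p * w.re + (p - 1)) := mul_le_mul_of_nonneg_right hKb hgnn
    linarith
  · -- outer region
    have hra : a - 1 ≤ r := by
      have := norm_sub_norm_le (w - 1) w
      simp only [sub_sub_cancel_left, norm_neg, norm_one] at this
      rw [← ha_def, ← hr_def] at this
      linarith
    have hr3 : (3:ℝ) ≤ r := by linarith
    have hrpos : (0:ℝ) < r := by linarith
    have ha2r : a ≤ 2 * r := by linarith
    have hrbig : (2 * p) ^ (1 / (p - 1)) ≤ r := by linarith
    have h2p0 : (0 : ℝ) < (2 * p) ^ (1 / (p - 1)) := Real.rpow_pos_of_pos (by linarith) _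
    have hrp1 : 2 * p ≤ r ^ (p - 1) := by
      have hexp : ((2 * p) ^ (1 / (p - 1))) ^ (p - 1) = 2 * p := by
        rw [← Real.rpow_mul (by positivity : (0:ℝ) ≤ 2 * p), one_div,
          inv_mul_cancel₀ (by linarith : p - 1 ≠ 0), Real.rpow_one]
      calc 2 * p = ((2 * p) ^ (1 / (p - 1))) ^ (p - 1) := hexp.symm
        _ ≤ r ^ (p - 1) := Real.rpow_le_rpow h2p0.le hrbig (by linarith)
    have hrp : r ^ p = r * r ^ (p - 1) := by
      have h := Real.rpow_add hrpos 1 (p - 1)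
      rw [show (1:ℝ) + (p - 1) = p by ring, Real.rpow_one] at h
      exact h
    have h10 : r * (r ^ (p - 1) / 2) ≤ r * (r ^ (p - 1) - p) :=
      mul_le_mul_of_nonneg_left (by linarith) hr0
    have hg2 : r ^ p / 2 ≤ r ^ p - p * r := by nlinarith [hrp, h10]
    have hap : a ^ p ≤ 2 ^ p * r ^ p := by
      have h11 : a ^ p ≤ (2 * r) ^ p := Real.rpow_le_rpow ha0 ha2r hp0.le
      rwa [Real.mul_rpow (by norm_num) hr0] at h11
    have h2p1 : (2:ℝ) ^ (p + 1) = 2 ^ p * 2 := Real.rpow_add_one two_ne_zero p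
    have h11 : (2:ℝ) ^ (p + 1) * (r ^ p / 2) = 2 ^ p * r ^ p := by rw [h2p1]; ring
    have h12 : (2:ℝ) ^ (p + 1) * (r ^ p / 2) ≤ 2 ^ (p + 1) * (r ^ p - p * r) :=
      mul_le_mul_of_nonneg_left hg2 h2p1pos.le
    have h13 : (2:ℝ) ^ (p + 1) * (r ^ p - p * r) ≤ 2 ^ (p + 1) * (r ^ p - p * w.re + (p - 1)) :=
      mul_le_mul_of_nonneg_left (by linarith) h2p1pos.le
    have h14 : (2:ℝ) ^ (p + 1) * (r ^ p - p * w.re + (p - 1)) ≤ K * (r ^ p - p * w.re + (p - 1)) :=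
      mul_le_mul_of_nonneg_right hK2 hgnn
    linarith


set_option maxHeartbeats 1000000 in
theorem thin_slice_probability (p : ℝ) (hp : 1 < p) (ε : ℝ) (hε : 0 < ε) :
    ∃ δ > (0 : ℝ), ∀ (Ω : Type) (_ : MeasurableSpace Ω) (ν : Measure Ω),
      IsProbabilityMeasure ν → ∀ z : Ω → ℂ, MemLp z (ENNReal.ofReal p) ν →
      eLpNorm z (ENNReal.ofReal p) ν ≤ 1 →
      1 - δ < (∫ ω, z ω ∂ν).re →
      eLpNorm (fun ω => z ω - 1) (ENNReal.ofReal p) ν < ENNReal.ofReal ε := by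
  have hp0 : (0 : ℝ) < p := by linarith
  set ε' : ℝ := min ε 1 with hε'_def
  have hε'0 : 0 < ε' := lt_min hε one_pos
  have hε'1 : ε' ≤ 1 := min_le_right _ _
  have hε'ε : ε' ≤ ε := min_le_left _ _
  set t : ℝ := ε' / 2 with ht_def
  have ht0 : 0 < t := by positivity
  have ht1 : t ≤ 1 := by rw [ht_def]; linarith
  obtain ⟨K, hK, hkey⟩ := thin_slice_key p hp t ht0 ht1
  have hεp0 : 0 < ε' ^ p := Real.rpow_pos_of_pos hε'0 p
  refine ⟨ε' ^ p / (4 * K * p), by positivity, ?_⟩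
  set δ : ℝ := ε' ^ p / (4 * K * p) with hδ_def
  intro Ω mΩ ν hν z hzmem hznorm hzre
  have hpne0 : ENNReal.ofReal p ≠ 0 := (ENNReal.ofReal_pos.mpr hp0).ne'
  have hpnetop : ENNReal.ofReal p ≠ ⊤ := ENNReal.ofReal_ne_top
  have htoReal : (ENNReal.ofReal p).toReal = p := ENNReal.toReal_ofReal hp0.le
  have hzint : Integrable z ν := hzmem.integrable (by
    rw [← ENNReal.ofReal_one]
    exact ENNReal.ofReal_le_ofReal hp.le)
  have hnormint : Integrable (fun ω => ‖z ω‖ ^ p) ν := by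
    have h := hzmem.integrable_norm_rpow hpne0 hpnetop
    rwa [htoReal] at h
  have hreint : Integrable (fun ω => (z ω).re) ν := hzint.re
  -- A ≤ 1
  have hA1 : ∫ ω, ‖z ω‖ ^ p ∂ν ≤ 1 := by
    have hl : ∫⁻ ω, (‖z ω‖₊ : ENNReal) ^ p ∂ν ≤ 1 := by
      rw [eLpNorm_eq_lintegral_rpow_enorm_toReal hpne0 hpnetop, htoReal] at hznorm
      have h := ENNReal.rpow_le_rpow hznorm hp0.le
      rwa [ENNReal.one_rpow, ← ENNReal.rpow_mul, one_div,
        inv_mul_cancel₀ hp0.ne', ENNReal.rpow_one] at h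
    have heq : ENNReal.ofReal (∫ ω, ‖z ω‖ ^ p ∂ν) = ∫⁻ ω, (‖z ω‖₊ : ENNReal) ^ p ∂ν := by
      rw [ofReal_integral_eq_lintegral_ofReal hnormint
        (Filter.Eventually.of_forall fun ω => Real.rpow_nonneg (norm_nonneg _) p)]
      refine lintegral_congr fun ω => ?_
      rw [← ENNReal.ofReal_coe_nnreal, coe_nnnorm, ENNReal.ofReal_rpow_of_nonneg (norm_nonneg _) hp0.le]
    rw [← ENNReal.ofReal_le_one, heq]
    exact hl
  -- B
  have hB : ∫ ω, (z ω).re ∂ν = (∫ ω, z ω ∂ν).re := integral_re hzint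
  have hBgt : 1 - δ < ∫ ω, (z ω).re ∂ν := by rw [hB]; exact hzre
  -- the defect integral
  have hgint : Integrable (fun ω => ‖z ω‖ ^ p - p * (z ω).re + (p - 1)) ν :=
    (hnormint.sub (hreint.const_mul p)).add (integrable_const _)
  have hgnn : ∀ ω, 0 ≤ ‖z ω‖ ^ p - p * (z ω).re + (p - 1) := by
    intro ω
    have h1 := thin_slice_young hp (norm_nonneg (z ω))
    have h2 : (z ω).re ≤ ‖z ω‖ := by
      exact Complex.re_le_norm _
    have h3 : p * (z ω).re ≤ p * ‖z ω‖ := mul_le_mul_of_nonneg_left h2 hp0.le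
    linarith
  have hgI : ∫ ω, (‖z ω‖ ^ p - p * (z ω).re + (p - 1)) ∂ν < p * δ := by
    have hsub : Integrable (fun ω => ‖z ω‖ ^ p - p * (z ω).re) ν :=
      hnormint.sub (hreint.const_mul p)
    have hcm : Integrable (fun ω => p * (z ω).re) ν := hreint.const_mul p
    rw [integral_add hsub (integrable_const _),
      integral_sub hnormint hcm, integral_const_mul, integral_const]
    simp only [measure_univ, probReal_univ, ENNReal.toReal_one, one_smul, smul_eq_mul]
    have h4 : p * (1 - δ) < p * ∫ ω, (z ω).re ∂ν := by
      exact mul_lt_mul_of_pos_left hBgt hp0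
    nlinarith
  -- the pointwise bound, integrated
  set F : Ω → ℝ := fun ω => t ^ p + K * (‖z ω‖ ^ p - p * (z ω).re + (p - 1)) with hF_def
  have hFint : Integrable F ν := (integrable_const _).add (hgint.const_mul K)
  have hFnn : ∀ ω, 0 ≤ F ω := fun ω => by
    have := mul_nonneg hK.le (hgnn ω)
    have := Real.rpow_nonneg ht0.le p
    simp only [hF_def]
    linarith
  have hmain : ∫⁻ ω, (‖z ω - 1‖₊ : ENNReal) ^ p ∂ν ≤ ENNReal.ofReal (∫ ω, F ω ∂ν) := by
    rw [ofReal_integral_eq_lintegral_ofReal hFint (Filter.Eventually.of_forall hFnn)]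
    refine lintegral_mono fun ω => ?_
    calc (‖z ω - 1‖₊ : ENNReal) ^ p = ENNReal.ofReal (‖z ω - 1‖ ^ p) := by
          rw [← ENNReal.ofReal_coe_nnreal, coe_nnnorm,
            ENNReal.ofReal_rpow_of_nonneg (norm_nonneg _) hp0.le]
      _ ≤ ENNReal.ofReal (F ω) := ENNReal.ofReal_le_ofReal (hkey (z ω))
  have hIF : ∫ ω, F ω ∂ν < ε' ^ p := by
    have hcm : Integrable (fun ω => K * (‖z ω‖ ^ p - p * (z ω).re + (p - 1))) ν :=
      hgint.const_mul K
    rw [hF_def, integral_add (integrable_const _) hcm, integral_const,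
      integral_const_mul]
    simp only [measure_univ, probReal_univ, ENNReal.toReal_one, one_smul, smul_eq_mul]
    have h5 : K * ∫ ω, (‖z ω‖ ^ p - p * (z ω).re + (p - 1)) ∂ν < K * (p * δ) :=
      mul_lt_mul_of_pos_left hgI hK
    have h6 : K * (p * δ) = ε' ^ p / 4 := by
      rw [hδ_def]; field_simp
    have h7 : t ^ p ≤ ε' ^ p / 2 := by
      have h8 : t ^ p = ε' ^ p * (1 / 2) ^ p := by
        rw [ht_def, show ε' / 2 = ε' * (1/2) by ring, Real.mul_rpow hε'0.le (by norm_num)]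
      have h9 : (1 / 2 : ℝ) ^ p ≤ (1 / 2 : ℝ) ^ (1 : ℝ) :=
        Real.rpow_le_rpow_of_exponent_ge (by norm_num) (by norm_num) hp.le
      rw [Real.rpow_one] at h9
      have h10 : ε' ^ p * (1 / 2) ^ p ≤ ε' ^ p * (1 / 2) :=
        mul_le_mul_of_nonneg_left h9 hεp0.le
      linarith
    linarith
  have hFI0 : 0 ≤ ∫ ω, F ω ∂ν := integral_nonneg hFnn
  -- conclude
  rw [eLpNorm_eq_lintegral_rpow_enorm_toReal hpne0 hpnetop, htoReal]
  calc (∫⁻ ω, (‖z ω - 1‖₊ : ENNReal) ^ p ∂ν) ^ (1 / p)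
      ≤ (ENNReal.ofReal (∫ ω, F ω ∂ν)) ^ (1 / p) := ENNReal.rpow_le_rpow hmain (by positivity)
    _ = ENNReal.ofReal ((∫ ω, F ω ∂ν) ^ (1 / p)) :=
        ENNReal.ofReal_rpow_of_nonneg hFI0 (by positivity)
    _ < ENNReal.ofReal ε := by
        rw [ENNReal.ofReal_lt_ofReal_iff hε]
        have h11 : (∫ ω, F ω ∂ν) ^ (1 / p) < (ε' ^ p) ^ (1 / p) :=
          Real.rpow_lt_rpow hFI0 hIF (by positivity)
        rw [← Real.rpow_mul hε'0.le, mul_one_div, div_self hp0.ne', Real.rpow_one] at h11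
        linarith
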